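/- The unit group of Z[ζ₅] is generated by -1, ζ₅ and ζ₅ + 1 (equivalently, modulo roots of unity it is generated by the fundamental unit ζ₅ + 1, the unit rank being 1). -/

import Mathlib

open NumberField

private lemma aux_pow_ineq (y : ℝ) (hy : 0 < y) (j : ℕ) :
    y^2 + (y^2)⁻¹ ≤ y^(j+2) + (y^(j+2))⁻¹ := by
  have h1 : (0:ℝ) ≤ (y^(j+4)-1)*(y^j-1) := by
    rcases le_total 1 y with h | h
    · exact mul_nonneg (by simpa using one_le_pow₀ h) (by simpa using one_le_pow₀ h)
    · have a1 : y^(j+4) ≤ 1 := pow_le_one₀ hy.le h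
      have a2 : y^j ≤ 1 := pow_le_one₀ hy.le h
      nlinarith
  have h2 : y^(j+2) + (y^(j+2))⁻¹ - (y^2 + (y^2)⁻¹) = ((y^(j+4)-1)*(y^j-1))/y^(j+2) := by
    have : y ≠ 0 := hy.ne'
    field_simp
    ring
  nlinarith [pow_pos hy (j+2), div_nonneg h1 (le_of_lt (pow_pos hy (j+2)))]

private lemma aux_trace_int (K : Type) [Field K] [NumberField K] (x : K) (hx : IsIntegral ℤ x) :
    ∃ n : ℤ, (n : ℚ) = Algebra.trace ℚ K x := by
  have h1 : IsIntegral ℤ (Algebra.trace ℚ K x) := Algebra.isIntegral_trace hx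
  obtain ⟨n, hn⟩ := IsIntegrallyClosed.isIntegral_iff.mp h1
  exact ⟨n, hn⟩

set_option maxHeartbeats 2000000 in
/-- The unit group of `ℤ[ζ₅]` is generated by `-1`, `ζ₅` and `ζ₅ + 1`. -/
theorem stmt_5 (K : Type) [Field K] [NumberField K] [IsCyclotomicExtension {5} ℚ K]
    (ζ : 𝓞 K) (hζ : IsPrimitiveRoot ζ 5)
    (u v : (𝓞 K)ˣ) (hu : (u : 𝓞 K) = ζ) (hv : (v : 𝓞 K) = ζ + 1) :
    Subgroup.closure ({-1, u, v} : Set (𝓞 K)ˣ) = ⊤ := by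
  classical
  have hirr : Irreducible (Polynomial.cyclotomic (↑(5:ℕ+)) ℚ) :=
    Polynomial.cyclotomic.irreducible_rat (by norm_num)
  have hζK' : IsPrimitiveRoot (algebraMap (𝓞 K) K ζ) ((5:ℕ+) : ℕ) :=
    hζ.map_of_injective RingOfIntegers.coe_injective
  set ζK := algebraMap (𝓞 K) K ζ with hζKdef
  haveI : IsCyclotomicExtension {((5:ℕ+):ℕ)} ℚ K := inferInstanceAs (IsCyclotomicExtension {5} ℚ K)
  -- the conjugation automorphism
  have hζK4 : IsPrimitiveRoot (ζK^4) ((5:ℕ+):ℕ) := hζK'.pow_of_coprime 4 (by norm_num)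
  have hmin : minpoly ℚ ((hζK'.powerBasis ℚ).gen) = minpoly ℚ ((hζK4.powerBasis ℚ).gen) := by
    rw [IsPrimitiveRoot.powerBasis_gen, IsPrimitiveRoot.powerBasis_gen,
      ← hζK'.minpoly_eq_cyclotomic_of_irreducible hirr,
      ← hζK4.minpoly_eq_cyclotomic_of_irreducible hirr]
  set c : K ≃ₐ[ℚ] K := (hζK'.powerBasis ℚ).equivOfMinpoly (hζK4.powerBasis ℚ) hmin with hc
  have hcζ : c ζK = ζK^4 := by
    have := (hζK'.powerBasis ℚ).equivOfMinpoly_gen (hζK4.powerBasis ℚ) hmin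
    rwa [IsPrimitiveRoot.powerBasis_gen, IsPrimitiveRoot.powerBasis_gen] at this
  -- σ ∘ c = conj ∘ σ for every embedding
  have key : ∀ (σ : K →+* ℂ) (x : K), σ (c x) = starRingEnd ℂ (σ x) := by
    intro σ
    have heq : (σ.comp (c : K →+* K)).toRatAlgHom = ((starRingEnd ℂ).comp σ).toRatAlgHom := by
      apply (hζK'.powerBasis ℚ).algHom_ext
      simp only [RingHom.toRatAlgHom, IsPrimitiveRoot.powerBasis_gen, AlgHom.coe_mk,
        RingHom.comp_apply]
      have hcc : (c : K →+* K) ζK = ζK^4 := hcζ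
      rw [hcc, map_pow]
      set z := σ ζK with hzdef
      have hz5 : z ^ 5 = 1 := by
        have : IsPrimitiveRoot z ((5:ℕ+):ℕ) := hζK'.map_of_injective σ.injective
        exact_mod_cast this.pow_eq_one
      have habs : ‖z‖ = 1 := Complex.norm_eq_one_of_pow_eq_one hz5 (by norm_num)
      rw [← Complex.inv_eq_conj habs]
      exact eq_inv_of_mul_eq_one_left (by linear_combination hz5)
    intro x
    exact DFunLike.congr_fun (congrArg AlgHom.toRingHom heq) x
  -- basic counting
  have hfr : Module.finrank ℚ K = 4 := by
    have := IsCyclotomicExtension.finrank (n := 5) K hirr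
    simpa [Nat.totient_prime (by norm_num : Nat.Prime 5)] using this
  have hcard : Fintype.card (K →ₐ[ℚ] ℂ) = 4 := by
    rw [AlgHom.card]; exact hfr
  have hrank : Units.rank K = 1 := by
    dsimp only [Units.rank]
    rw [InfinitePlace.card_eq_nrRealPlaces_add_nrComplexPlaces,
      IsCyclotomicExtension.Rat.nrRealPlaces_eq_zero (n := 5) K (by decide), zero_add,
      IsCyclotomicExtension.Rat.nrComplexPlaces_eq_totient_div_two (n := 5) K]
    rfl
  set S := Subgroup.closure ({-1, u, v} : Set (𝓞 K)ˣ) with hS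
  have hneg1S : (-1 : (𝓞 K)ˣ) ∈ S := Subgroup.subset_closure (by simp)
  have huS : u ∈ S := Subgroup.subset_closure (by simp)
  have hvS : v ∈ S := Subgroup.subset_closure (by simp)
  -- torsion is contained in S
  have htorS : ∀ x : (𝓞 K)ˣ, x ∈ Units.torsion K → x ∈ S := by
    intro x hx
    have hfin : IsOfFinOrder ((x : 𝓞 K) : K) := by
      obtain ⟨N, hN, h⟩ := isOfFinOrder_iff_pow_eq_one.1 ((CommGroup.mem_torsion _).1 hx)
      refine isOfFinOrder_iff_pow_eq_one.2 ⟨N, hN, ?_⟩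
      have : ((x ^ N : (𝓞 K)ˣ) : 𝓞 K) = ((1 : (𝓞 K)ˣ) : 𝓞 K) := by rw [h]
      push_cast at this
      rw [← map_pow]
      rw [this]
      simp
    obtain ⟨r, hr5, hru⟩ := hζK'.exists_pow_or_neg_mul_pow_of_isOfFinOrder (by decide) hfin
    have huζ : ((u : 𝓞 K) : K) = ζK := by rw [hu]
    rcases hru with h | h
    · have : x = u ^ r := by
        ext
        push_cast
        rw [h, ← huζ]
      rw [this]; exact Subgroup.pow_mem S huS r
    · have : x = (-1) * u ^ r := by
        ext
        push_cast
        rw [h, ← huζ]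
        push_cast
        ring
      rw [this]; exact Subgroup.mul_mem S hneg1S (Subgroup.pow_mem S huS r)
  -- torsion elements have absolute value 1 at every embedding
  have htabs : ∀ x : (𝓞 K)ˣ, x ∈ Units.torsion K → ∀ σ : K →ₐ[ℚ] ℂ,
      ‖σ (algebraMap (𝓞 K) K (x : 𝓞 K))‖ = 1 := by
    intro x hx σ
    obtain ⟨N, hN, h⟩ := isOfFinOrder_iff_pow_eq_one.1 ((CommGroup.mem_torsion _).1 hx)
    refine Complex.norm_eq_one_of_pow_eq_one (n := N) ?_ hN.ne'
    have h1 : ((x ^ N : (𝓞 K)ˣ) : 𝓞 K) = ((1 : (𝓞 K)ˣ) : 𝓞 K) := by rw [h]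
    push_cast at h1
    rw [← map_pow, ← map_pow, h1, map_one, map_one]
  -- the key quadratic relation for |σ(v)|²
  set W : (K →ₐ[ℚ] ℂ) → ℝ := fun σ => (‖σ (algebraMap (𝓞 K) K (v : 𝓞 K))‖)^2
    with hWdef
  have hWrel : ∀ σ : (K →ₐ[ℚ] ℂ), (W σ)^2 - 3*(W σ) + 1 = 0 := by
    intro σ
    set z := σ ζK with hzdef
    have hzprim : IsPrimitiveRoot z ((5:ℕ+):ℕ) := hζK'.map_of_injective
      (σ.toRingHom.injective)
    have hz5 : z ^ 5 = 1 := by exact_mod_cast hzprim.pow_eq_one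
    have hgeom : 1 + z + z^2 + z^3 + z^4 = 0 := by
      have h2 : ∑ i ∈ Finset.range 5, z ^ i = 0 := by
        have := hzprim.geom_sum_eq_zero (by norm_num)
        simpa using this
      simp [Finset.sum_range_succ] at h2
      linear_combination h2
    have hvK : σ (algebraMap (𝓞 K) K (v : 𝓞 K)) = 1 + z := by
      rw [hv]
      push_cast
      rw [map_add, map_one]
      ring
    have habs : ‖z‖ = 1 := Complex.norm_eq_one_of_pow_eq_one hz5 (by norm_num)
    have hconj : starRingEnd ℂ z = z^4 := by
      rw [← Complex.inv_eq_conj habs]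
      exact (eq_inv_of_mul_eq_one_left (by linear_combination hz5)).symm
    have hCrel : ((1+z)*(1+z^4))^2 - 3*((1+z)*(1+z^4)) + 1 = 0 := by
      linear_combination (z^5+2*z^4+z^3+2*z+2)*hz5 + hgeom
    have hA : ((‖1+z‖ : ℂ))^2 = (1+z)*(1+z^4) := by
      rw [show ((‖1+z‖ : ℂ))^2 = (((‖1+z‖)^2 : ℝ) : ℂ) by push_cast; ring,
        Complex.sq_norm, ← Complex.mul_conj, map_add, map_one, hconj]
    have hE : ((((‖1+z‖)^2 : ℝ) : ℂ))^2 - 3*(((‖1+z‖)^2 : ℝ) : ℂ) + 1 = 0 := by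
      push_cast
      rw [hA]
      linear_combination hCrel
    have hW' : W σ = (‖1+z‖)^2 := by rw [hWdef]; simp only [hvK]
    rw [hW']
    exact_mod_cast hE
  have hWpos : ∀ σ : (K →ₐ[ℚ] ℂ), 0 < W σ := by
    intro σ
    have h0 : 0 ≤ W σ := sq_nonneg _
    rcases h0.lt_or_eq with h | h
    · exact h
    · exfalso; have := hWrel σ; rw [← h] at this; norm_num at this
  have hEmb : Nonempty (K →ₐ[ℚ] ℂ) := by
    rw [← Fintype.card_pos_iff, hcard]; norm_num
  have hVnotTor : v ∉ Units.torsion K := by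
    intro h
    obtain ⟨σ⟩ := hEmb
    have h1 := htabs v h σ
    have h2 := hWrel σ
    rw [hWdef] at h2
    simp only [h1] at h2
    norm_num at h2
  -- decomposition of v
  have i0 : Fin (Units.rank K) := ⟨0, by omega⟩
  have hprodone : ∀ (f : Fin (Units.rank K) → (𝓞 K)ˣ), ∏ i, f i = f i0 := by
    intro f
    apply Finset.prod_eq_single_of_mem i0 (Finset.mem_univ _)
    intro j _ hj
    exact absurd (Fin.ext (by omega)) hj
  obtain ⟨⟨x, e⟩, hxe, -⟩ := NumberField.Units.exist_unique_eq_mul_prod K v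
  set ε := NumberField.Units.fundSystem K i0 with hεdef
  set m := e i0 with hmdef
  have hv_eq : v = (x : (𝓞 K)ˣ) * ε ^ m := by
    rw [hxe]
    congr 1
    exact hprodone (fun i => NumberField.Units.fundSystem K i ^ e i)
  -- the main claim: m = ±1
  have hm : m = 1 ∨ m = -1 := by
    by_contra hm'
    push_neg at hm'
    rcases eq_or_ne m 0 with h0 | h0
    · exact hVnotTor (by rw [hv_eq, h0, zpow_zero, mul_one]; exact x.2)
    have h2m : 2 ≤ m.natAbs := by
      rcases hm' with ⟨ha, hb⟩
      omega
    set eK : K := algebraMap (𝓞 K) K ((ε : 𝓞 K)) with heK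
    set eK' : K := algebraMap (𝓞 K) K (((ε⁻¹ : (𝓞 K)ˣ) : 𝓞 K)) with heK'
    have hee'0 : ((ε : 𝓞 K) * ((ε⁻¹ : (𝓞 K)ˣ) : 𝓞 K)) = 1 := by
      rw [← Units.val_mul, mul_inv_cancel, Units.val_one]
    have hee' : eK * eK' = 1 := by
      rw [heK, heK', ← map_mul, hee'0, map_one]
    have hIntK : IsIntegral ℤ (eK * c eK + eK' * c eK') := by
      have h1 : IsIntegral ℤ eK := RingOfIntegers.isIntegral_coe _
      have h2 : IsIntegral ℤ eK' := RingOfIntegers.isIntegral_coe _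
      have h3 : IsIntegral ℤ (c eK) := h1.map (c.toAlgHom.restrictScalars ℤ)
      have h4 : IsIntegral ℤ (c eK') := h2.map (c.toAlgHom.restrictScalars ℤ)
      exact (h1.mul h3).add (h2.mul h4)
    obtain ⟨n, hn⟩ := aux_trace_int K _ hIntK
    have hsum : algebraMap ℚ ℂ ((n : ℚ)) = ∑ σ : K →ₐ[ℚ] ℂ, σ (eK * c eK + eK' * c eK') := by
      rw [hn]; exact trace_eq_sum_embeddings ℂ
    set t : (K →ₐ[ℚ] ℂ) → ℝ := fun σ => (‖σ eK‖)^2 + (‖σ eK'‖)^2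
      with ht
    have hterm : ∀ σ : K →ₐ[ℚ] ℂ, σ (eK * c eK + eK' * c eK') = ((t σ : ℝ) : ℂ) := by
      intro σ
      rw [map_add, map_mul, map_mul]
      have k1 : σ (c eK) = starRingEnd ℂ (σ eK) := key σ.toRingHom eK
      have k2 : σ (c eK') = starRingEnd ℂ (σ eK') := key σ.toRingHom eK'
      rw [k1, k2, Complex.mul_conj, Complex.mul_conj, ht]
      push_cast [Complex.sq_norm]
      ring
    have hnsum : (n : ℝ) = ∑ σ : K →ₐ[ℚ] ℂ, t σ := by
      have h1 : ((n:ℚ):ℂ) = ∑ σ : K →ₐ[ℚ] ℂ, ((t σ : ℝ):ℂ) := by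
        rw [show ((n:ℚ):ℂ) = algebraMap ℚ ℂ (n:ℚ) by norm_cast, hsum]
        exact Finset.sum_congr rfl (fun σ _ => hterm σ)
      exact_mod_cast h1
    have habs_pos : ∀ σ : K →ₐ[ℚ] ℂ, 0 < ‖σ eK‖ := by
      intro σ
      have h1 : σ eK * σ eK' = 1 := by rw [← map_mul, hee', map_one]
      apply norm_pos_iff.mpr
      intro h
      rw [h, zero_mul] at h1
      exact zero_ne_one h1
    have habs'_eq : ∀ σ : K →ₐ[ℚ] ℂ, ‖σ eK'‖ = (‖σ eK‖)⁻¹ := by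
      intro σ
      have h1 : ‖σ eK‖ * ‖σ eK'‖ = 1 := by
        rw [← norm_mul, ← map_mul, hee', map_one, norm_one]
      exact eq_inv_of_mul_eq_one_left (by rw [mul_comm]; exact h1)
    have htform : ∀ σ : K →ₐ[ℚ] ℂ, t σ = (‖σ eK‖)^2 + ((‖σ eK‖)^2)⁻¹ := by
      intro σ
      rw [ht]
      dsimp only
      rw [habs'_eq σ, inv_pow]
    have hlow : ∀ σ : K →ₐ[ℚ] ℂ, 2 ≤ t σ := by
      intro σ
      rw [htform σ]
      set a := ‖σ eK‖ with ha
      have ha0 : 0 < a := habs_pos σ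
      have h1 : a^2 * (a^2)⁻¹ = 1 := mul_inv_cancel₀ (by positivity)
      nlinarith [sq_nonneg (a^2 - 1), sq_nonneg a, inv_pos.2 (pow_pos ha0 2)]
    -- the upper bound
    have hup : ∀ σ : K →ₐ[ℚ] ℂ, t σ ≤ 2.24 := by
      intro σ
      set y := (‖σ eK‖)^2 with hy
      have hy0 : 0 < y := pow_pos (habs_pos σ) 2
      have htσ : t σ = y + y⁻¹ := htform σ
      -- find Y > 0 with Y ^ m.natAbs = W σ and Y + Y⁻¹ = y + y⁻¹
      have hYex : ∃ Y : ℝ, 0 < Y ∧ Y ^ m.natAbs = W σ ∧ Y + Y⁻¹ = y + y⁻¹ := by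
        have hvabs : ∀ (w : 𝓞 K), (v : 𝓞 K) = w →
            ‖σ (algebraMap (𝓞 K) K w)‖ ^ 2 = W σ := by
          intro w hw
          rw [hWdef]
          dsimp only
          rw [hw]
        rcases Int.natAbs_eq m with hm1 | hm1
        · refine ⟨y, hy0, ?_, rfl⟩
          have hveq2 : (v : 𝓞 K) = (x : (𝓞 K)ˣ) * ((ε : 𝓞 K))^(m.natAbs) := by
            have : v = (x : (𝓞 K)ˣ) * ε ^ (m.natAbs) := by
              rw [hv_eq]
              congr 1
              rw [← zpow_natCast, ← hm1]
            rw [this]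
            push_cast
            ring
          have h2 := hvabs _ hveq2
          have hxa := htabs (x : (𝓞 K)ˣ) x.2 σ
          simp only [map_mul, map_pow, norm_mul, norm_pow, hxa, one_mul] at h2
          rw [← heK] at h2
          rw [hy, ← h2]
          ring
        · refine ⟨y⁻¹, inv_pos.2 hy0, ?_, by rw [inv_inv, add_comm]⟩
          have hveq2 : (v : 𝓞 K) = (x : (𝓞 K)ˣ) * (((ε⁻¹ : (𝓞 K)ˣ) : 𝓞 K))^(m.natAbs) := by
            have : v = (x : (𝓞 K)ˣ) * (ε⁻¹) ^ (m.natAbs) := by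
              rw [hv_eq]
              congr 1
              rw [inv_pow, ← zpow_natCast, ← zpow_neg, ← hm1]
            rw [this]
            push_cast
            ring
          have h2 := hvabs _ hveq2
          have hxa := htabs (x : (𝓞 K)ˣ) x.2 σ
          simp only [map_mul, map_pow, norm_mul, norm_pow, hxa, one_mul] at h2
          rw [← heK'] at h2
          rw [hy, ← h2, habs'_eq σ]
          rw [inv_pow]
          ring
      obtain ⟨Y, hY0, hYW, hYy⟩ := hYex
      have hW3 : W σ + (W σ)⁻¹ = 3 := by
        have h1 := hWrel σ
        have h2 := hWpos σ
        field_simp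
        nlinarith [h1]
      have haux : Y^2 + (Y^2)⁻¹ ≤ 3 := by
        obtain ⟨j, hj⟩ : ∃ j, m.natAbs = j + 2 := ⟨m.natAbs - 2, by omega⟩
        have := aux_pow_ineq Y hY0 j
        rw [← hj, hYW] at this
        linarith [this, hW3.le, hW3.ge]
      have hYinv : Y * Y⁻¹ = 1 := mul_inv_cancel₀ hY0.ne'
      have hs : (Y + Y⁻¹)^2 ≤ 5 := by
        have hip : (Y⁻¹)^2 = (Y^2)⁻¹ := by rw [inv_pow]
        nlinarith [haux, hYinv]
      have hYpos : 0 < Y + Y⁻¹ := by positivity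
      have : Y + Y⁻¹ ≤ 2.24 := by nlinarith [hs, hYpos]
      rw [htσ, ← hYy]
      exact this
    have hcard' : (Finset.univ : Finset (K →ₐ[ℚ] ℂ)).card = 4 := by
      simpa using hcard
    have hge : (8:ℝ) ≤ (n:ℝ) := by
      rw [hnsum]
      calc (8:ℝ) = ∑ _σ : K →ₐ[ℚ] ℂ, (2:ℝ) := by
            rw [Finset.sum_const, hcard']; norm_num
        _ ≤ _ := Finset.sum_le_sum (fun σ _ => hlow σ)
    have hle : (n:ℝ) ≤ 8.96 := by
      rw [hnsum]
      calc ∑ σ : K →ₐ[ℚ] ℂ, t σ ≤ ∑ _σ : K →ₐ[ℚ] ℂ, (2.24:ℝ) :=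
            Finset.sum_le_sum (fun σ _ => hup σ)
        _ = 8.96 := by rw [Finset.sum_const, hcard']; norm_num
    have hn8 : n = 8 := by
      have h1 : (8:ℤ) ≤ n := by exact_mod_cast hge
      have h2 : n ≤ 8 := by
        by_contra h
        push_neg at h
        have : (9:ℝ) ≤ (n:ℝ) := by exact_mod_cast h
        linarith
      omega
    have hall : ∀ σ : K →ₐ[ℚ] ℂ, t σ = 2 := by
      have hsum0 : ∑ σ : K →ₐ[ℚ] ℂ, (t σ - 2) = 0 := by
        rw [Finset.sum_sub_distrib, ← hnsum, hn8, Finset.sum_const, hcard']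
        norm_num
      intro σ
      have h2 := (Finset.sum_eq_zero_iff_of_nonneg
        (fun τ _ => by linarith [hlow τ])).1 hsum0 σ (Finset.mem_univ _)
      linarith
    have habs1 : ∀ φ : K →+* ℂ, ‖φ eK‖ = 1 := by
      intro φ
      have hσ := hall φ.toRatAlgHom
      rw [htform] at hσ
      have ha0 : 0 < ‖φ.toRatAlgHom eK‖ := habs_pos _
      have haK : ‖φ.toRatAlgHom eK‖ = 1 := by
        set a := ‖φ.toRatAlgHom eK‖ with ha
        have h1 : a^2 * (a^2)⁻¹ = 1 := mul_inv_cancel₀ (by positivity)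
        nlinarith [sq_nonneg (a^2 - 1), sq_nonneg (a - 1), sq_nonneg (a + 1)]
      have : φ.toRatAlgHom eK = φ eK := rfl
      rw [← this]
      rw [haK]
    obtain ⟨N, hN0, hNe⟩ := NumberField.Embeddings.pow_eq_one_of_norm_eq_one K ℂ
      (RingOfIntegers.isIntegral_coe _) habs1
    have hεN : ε ^ N = 1 := by
      have h9 : eK ^ N = 1 := hNe
      rw [heK] at h9
      ext
      push_cast
      exact h9
    have hεtor : ε ∈ Units.torsion K :=
      (CommGroup.mem_torsion _).2 (isOfFinOrder_iff_pow_eq_one.2 ⟨N, hN0, hεN⟩)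
    exact hVnotTor (by rw [hv_eq]; exact mul_mem x.2 (Subgroup.zpow_mem _ hεtor m))
  -- conclude
  have hεS : ε ∈ S := by
    have hxS : (x : (𝓞 K)ˣ) ∈ S := htorS _ x.2
    rcases hm with h1 | h1
    · have hε : ε = (x : (𝓞 K)ˣ)⁻¹ * v := by rw [hv_eq, h1, zpow_one]; group
      rw [hε]; exact mul_mem (inv_mem hxS) hvS
    · have hε : ε = ((x : (𝓞 K)ˣ)⁻¹ * v)⁻¹ := by rw [hv_eq, h1]; group
      rw [hε]; exact inv_mem (mul_mem (inv_mem hxS) hvS)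
  rw [eq_top_iff]
  intro g _
  obtain ⟨⟨xg, eg⟩, hg, -⟩ := NumberField.Units.exist_unique_eq_mul_prod K g
  have hgeq : g = (xg : (𝓞 K)ˣ) * ε ^ (eg i0) := by
    rw [hg]
    congr 1
    · exact hprodone (fun i => NumberField.Units.fundSystem K i ^ eg i)
  rw [hgeq]
  exact mul_mem (htorS _ xg.2) (Subgroup.zpow_mem S hεS _)
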